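/- Let (X, d) be a metric space and ρ : X × X → ℝ a function such that for every y ∈ X, the function x ↦ ρ(x, y) is uniquely minimized at x = y (honesty). Let P be a probability measure on X with Fréchet ρ-function F_P(x) = E_{Y∼P}[ρ(x,Y)], and suppose the minimizer set M(P) = argmin F_P is nonempty. Then for every t ∈ (0,1] and every x ∈ M(P), the perturbed measure P_{x,t} = (1−t)P + t δ_x has a unique Fréchet ρ-mean, namely M(P_{x,t}) = {x}. -/
import Mathlib


open MeasureTheory

/-- Instability of non-uniqueness: perturbing `P` by a Dirac mass at one of its
Fréchet `ρ`-means makes that point the unique Fréchet `ρ`-mean. -/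
theorem frechet_mean_perturbed_unique
    {X : Type*} [MetricSpace X] [MeasurableSpace X] [BorelSpace X]
    (ρ : X → X → ℝ) (hρmeas : Measurable fun p : X × X => ρ p.1 p.2)
    (honest : ∀ x y : X, y ≠ x → ρ x x < ρ y x)
    (P : Measure X) [IsProbabilityMeasure P]
    (hint : ∀ x : X, Integrable (fun y => ρ x y) P)
    (hne : {x : X | ∀ x', ∫ y, ρ x y ∂P ≤ ∫ y, ρ x' y ∂P}.Nonempty)
    (t : ℝ) (ht0 : 0 < t) (ht1 : t ≤ 1)
    (x : X) (hx : x ∈ {x : X | ∀ x', ∫ y, ρ x y ∂P ≤ ∫ y, ρ x' y ∂P})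
    (Q : Measure X)
    (hQ : Q = Real.toNNReal (1 - t) • P + Real.toNNReal t • Measure.dirac x) :
    {z : X | ∀ z', ∫ y, ρ z y ∂Q ≤ ∫ y, ρ z' y ∂Q} = {x} := by
  have h1t : (0:ℝ) ≤ 1 - t := by linarith
  have key : ∀ z : X, ∫ y, ρ z y ∂Q = (1 - t) * ∫ y, ρ z y ∂P + t * ρ z x := by
    intro z
    have hmeas : Measurable (fun y => ρ z y) :=
      hρmeas.comp (measurable_prodMk_left)
    have hi1 : Integrable (fun y => ρ z y) (Real.toNNReal (1 - t) • P) :=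
      (hint z).smul_measure_nnreal
    have hi2 : Integrable (fun y => ρ z y) (Real.toNNReal t • Measure.dirac x) := by
      refine Integrable.smul_measure_nnreal ?_
      refine ⟨hmeas.aestronglyMeasurable, ?_⟩
      rw [hasFiniteIntegral_iff_norm]
      rw [MeasureTheory.lintegral_dirac]
      exact ENNReal.ofReal_lt_top
    rw [hQ, integral_add_measure hi1 hi2, integral_smul_nnreal_measure,
      integral_smul_nnreal_measure, integral_dirac]
    simp [NNReal.smul_def, Real.coe_toNNReal _ h1t, Real.coe_toNNReal _ ht0.le]
  ext z
  simp only [Set.mem_setOf_eq, Set.mem_singleton_iff]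
  constructor
  · intro hz
    by_contra hzx
    have h1 := hz x
    rw [key z, key x] at h1
    have h2 : ∫ y, ρ x y ∂P ≤ ∫ y, ρ z y ∂P := hx z
    have h3 : ρ x x < ρ z x := honest x z hzx
    nlinarith
  · rintro rfl z'
    rw [key z, key z']
    have h2 : ∫ y, ρ z y ∂P ≤ ∫ y, ρ z' y ∂P := hx z'
    have h3 : ρ z z ≤ ρ z' z := by
      rcases eq_or_ne z' z with rfl | h
      · exact le_rfl
      · exact (honest z z' h).le
    nlinarith
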